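/- A nontrivial finite projective rectangle of order (m,n) satisfies n ≥ m^2. -/

import Mathlib

open scoped Classical

/-- A projective rectangle: an incidence structure satisfying axioms (A1)–(A6). -/
structure ProjRect (P L : Type*) where
  incid : P → L → Prop
  /-- (A4) the special point -/
  D : P
  /-- (A1) every two distinct points are incident with exactly one line -/
  A1 : ∀ p q : P, p ≠ q → ∃! l : L, incid p l ∧ incid q l
  /-- (A2) there exist four points with no three collinear -/
  A2 : ∃ p1 p2 p3 p4 : P, p1 ≠ p2 ∧ p1 ≠ p3 ∧ p1 ≠ p4 ∧ p2 ≠ p3 ∧ p2 ≠ p4 ∧ p3 ≠ p4 ∧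
    ∀ l : L, ¬(incid p1 l ∧ incid p2 l ∧ incid p3 l) ∧ ¬(incid p1 l ∧ incid p2 l ∧ incid p4 l) ∧
      ¬(incid p1 l ∧ incid p3 l ∧ incid p4 l) ∧ ¬(incid p2 l ∧ incid p3 l ∧ incid p4 l)
  /-- (A3) every line has at least three points -/
  A3 : ∀ l : L, ∃ p1 p2 p3 : P, p1 ≠ p2 ∧ p1 ≠ p3 ∧ p2 ≠ p3 ∧
    incid p1 l ∧ incid p2 l ∧ incid p3 l
  /-- (A5) each special line intersects every other line in exactly one point -/
  A5 : ∀ s l : L, incid D s → l ≠ s → ∃! p : P, incid p s ∧ incid p l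
  /-- (A6) Pasch-type axiom -/
  A6 : ∀ l1 l2 g h : L, ¬incid D l1 → ¬incid D l2 → (∃ p : P, incid p l1 ∧ incid p l2) →
    (∃ p1 p2 p3 p4 : P, p1 ≠ p2 ∧ p1 ≠ p3 ∧ p1 ≠ p4 ∧ p2 ≠ p3 ∧ p2 ≠ p4 ∧ p3 ≠ p4 ∧
      incid p1 g ∧ incid p1 l1 ∧ incid p2 g ∧ incid p2 l2 ∧
      incid p3 h ∧ incid p3 l1 ∧ incid p4 h ∧ incid p4 l2) →
    ∃ p : P, incid p g ∧ incid p h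

namespace ProjRect

variable {P L : Type*} (R : ProjRect P L)

/-- A line is special if it is incident with the special point `D`. -/
def SpecialLine (l : L) : Prop := R.incid R.D l

/-- A line is ordinary if it is not incident with `D`. -/
def OrdinaryLine (l : L) : Prop := ¬ R.incid R.D l

/-- A point is ordinary if it is not `D`. -/
def OrdinaryPoint (p : P) : Prop := p ≠ R.D

/-- The set of points of a line. -/
def points (l : L) : Set P := {p | R.incid p l}

/-- `R` has order `(m, n)`: there are `m+1` special lines, each with `n+1` points. -/
def HasOrder (m n : ℕ) : Prop :=
  {l : L | R.SpecialLine l}.ncard = m + 1 ∧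
  ∀ l : L, R.SpecialLine l → (R.points l).ncard = n + 1

/-- Nontrivial: there exist two disjoint ordinary lines (i.e. `R` is not a projective plane). -/
def Nontrivial : Prop :=
  ∃ l1 l2 : L, R.OrdinaryLine l1 ∧ R.OrdinaryLine l2 ∧ ∀ p : P, ¬(R.incid p l1 ∧ R.incid p l2)

/-- An incidence substructure `(Ps, Ls)` that is a projective plane. -/
def IsSubplane (Ps : Set P) (Ls : Set L) : Prop :=
  (∀ p ∈ Ps, ∀ q ∈ Ps, p ≠ q → ∃! l : L, l ∈ Ls ∧ R.incid p l ∧ R.incid q l) ∧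
  (∀ l ∈ Ls, ∀ l' ∈ Ls, l ≠ l' → ∃! p : P, p ∈ Ps ∧ R.incid p l ∧ R.incid p l') ∧
  (∀ l ∈ Ls, ∀ p : P, R.incid p l → p ∈ Ps) ∧
  (∃ p1 ∈ Ps, ∃ p2 ∈ Ps, ∃ p3 ∈ Ps, ∃ p4 ∈ Ps,
    p1 ≠ p2 ∧ p1 ≠ p3 ∧ p1 ≠ p4 ∧ p2 ≠ p3 ∧ p2 ≠ p4 ∧ p3 ≠ p4 ∧
    ∀ l ∈ Ls, ¬(R.incid p1 l ∧ R.incid p2 l ∧ R.incid p3 l) ∧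
      ¬(R.incid p1 l ∧ R.incid p2 l ∧ R.incid p4 l) ∧
      ¬(R.incid p1 l ∧ R.incid p3 l ∧ R.incid p4 l) ∧
      ¬(R.incid p2 l ∧ R.incid p3 l ∧ R.incid p4 l))

/-- A plane: a maximal subplane. -/
def IsPlane (Ps : Set P) (Ls : Set L) : Prop :=
  R.IsSubplane Ps Ls ∧
  ∀ Ps' Ls', R.IsSubplane Ps' Ls' → Ps ⊆ Ps' → Ls ⊆ Ls' → Ps = Ps' ∧ Ls = Ls'

/-- The graph of lines: vertices are the ordinary lines, adjacent iff they intersect. -/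
def lineGraph : SimpleGraph {l : L // R.OrdinaryLine l} where
  Adj l1 l2 := l1 ≠ l2 ∧ ∃ p : P, R.incid p l1.1 ∧ R.incid p l2.1
  symm := by
    constructor
    rintro a b ⟨hne, p, h1, h2⟩
    exact ⟨hne.symm, p, h2, h1⟩
  loopless := by
    constructor
    rintro a ⟨hne, -⟩
    exact hne rfl

end ProjRect

set_option linter.unusedSectionVars false
namespace PRaux

variable {P L : Type*}

lemma eq_line (R : ProjRect P L) {p q : P} {l l' : L} (hpq : p ≠ q)
    (h1 : R.incid p l) (h2 : R.incid q l) (h3 : R.incid p l') (h4 : R.incid q l') : l = l' := by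
  obtain ⟨u, -, hu⟩ := R.A1 p q hpq
  rw [hu l ⟨h1, h2⟩, hu l' ⟨h3, h4⟩]

lemma eq_pt (R : ProjRect P L) {p q : P} {l l' : L} (hll : l ≠ l')
    (h1 : R.incid p l) (h2 : R.incid p l') (h3 : R.incid q l) (h4 : R.incid q l') : p = q := by
  by_contra h
  exact hll (eq_line R h h1 h3 h2 h4)

noncomputable def jn (R : ProjRect P L) [Nonempty L] (p q : P) : L :=
  if h : p ≠ q then (R.A1 p q h).exists.choose else Classical.arbitrary L

lemma jn_spec {R : ProjRect P L} [Nonempty L] {p q : P} (h : p ≠ q) :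
    R.incid p (jn R p q) ∧ R.incid q (jn R p q) := by
  rw [jn, dif_pos h]
  exact (R.A1 p q h).exists.choose_spec

noncomputable def mt2 (R : ProjRect P L) (l l' : L) : P :=
  if h : ∃ p, R.incid p l ∧ R.incid p l' then h.choose else R.D

lemma mt2_spec {R : ProjRect P L} {l l' : L} (h : ∃ p, R.incid p l ∧ R.incid p l') :
    R.incid (mt2 R l l') l ∧ R.incid (mt2 R l l') l' := by
  rw [mt2, dif_pos h]
  exact h.choose_spec

lemma meets_of_special (R : ProjRect P L) {s l : L} (hs : R.incid R.D s) (hne : l ≠ s) :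
    ∃ p, R.incid p s ∧ R.incid p l :=
  (R.A5 s l hs hne).exists

section Fin
variable [Fintype P] [Fintype L]

lemma ncard_eq {α : Type*} [Fintype α] (s : Set α) :
    s.ncard = (Finset.univ.filter (· ∈ s)).card := by
  rw [← Nat.card_coe_set_eq, Nat.card_eq_fintype_card, Fintype.card_subtype]

/-- the finset of special lines -/
noncomputable def specF (R : ProjRect P L) : Finset L :=
  Finset.univ.filter (fun s => R.incid R.D s)

/-- the finset of points of a line -/
noncomputable def ptsF (R : ProjRect P L) (l : L) : Finset P :=
  Finset.univ.filter (fun p => R.incid p l)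

@[simp] lemma mem_specF {R : ProjRect P L} {l : L} : l ∈ specF R ↔ R.incid R.D l := by
  simp [specF]

@[simp] lemma mem_ptsF {R : ProjRect P L} {l : L} {p : P} : p ∈ ptsF R l ↔ R.incid p l := by
  simp [ptsF]

lemma spec_card {R : ProjRect P L} {m n : ℕ} (ho : R.HasOrder m n) :
    (specF R).card = m + 1 := by
  have h1 : specF R = Finset.univ.filter (· ∈ ({l : L | R.SpecialLine l} : Set L)) := by
    ext l; simp only [specF, ProjRect.SpecialLine, Finset.mem_filter, Finset.mem_univ, true_and, Set.mem_setOf_eq]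
  rw [h1, ← ncard_eq]
  exact ho.1

lemma pts_card_special {R : ProjRect P L} {m n : ℕ} (ho : R.HasOrder m n) {s : L}
    (hs : R.incid R.D s) : (ptsF R s).card = n + 1 := by
  have h1 : ptsF R s = Finset.univ.filter (· ∈ R.points s) := by
    ext p; simp only [ptsF, ProjRect.points, Finset.mem_filter, Finset.mem_univ, true_and, Set.mem_setOf_eq]
  rw [h1, ← ncard_eq]
  exact ho.2 s hs

/-- every ordinary line has exactly m+1 points -/
lemma pts_card_ord {R : ProjRect P L} [Nonempty L] {m n : ℕ} (ho : R.HasOrder m n) {l : L}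
    (hl : ¬ R.incid R.D l) : (ptsF R l).card = m + 1 := by
  have hls : ∀ s : L, R.incid R.D s → l ≠ s := by
    intro s hs h; exact hl (h ▸ hs)
  have hle : (ptsF R l).card ≤ (specF R).card := by
    apply Finset.card_le_card_of_injOn (fun p => jn R p R.D)
    · intro p hp
      have hp' : R.incid p l := mem_ptsF.mp hp
      have hpD : p ≠ R.D := fun h => hl (h ▸ hp')
      exact mem_specF.mpr (jn_spec (R := R) hpD).2
    · intro p hp q hq hpq
      have hp' : R.incid p l := mem_ptsF.mp (Finset.mem_coe.mp hp)
      have hq' : R.incid q l := mem_ptsF.mp (Finset.mem_coe.mp hq)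
      by_contra hne
      have hpD : p ≠ R.D := fun h => hl (h ▸ hp')
      have hqD : q ≠ R.D := fun h => hl (h ▸ hq')
      have h1 := jn_spec (R := R) hpD
      have h2 := jn_spec (R := R) hqD
      have hpq' : jn R p R.D = jn R q R.D := hpq
      rw [hpq'] at h1
      have hnl : jn R q R.D ≠ l := fun h => hl (h ▸ h2.2)
      exact hne (eq_pt R hnl h1.1 hp' h2.1 hq')
  have hge : (specF R).card ≤ (ptsF R l).card := by
    apply Finset.card_le_card_of_injOn (fun s => mt2 R s l)
    · intro s hs
      have hs' : R.incid R.D s := mem_specF.mp hs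
      exact mem_ptsF.mpr (mt2_spec (meets_of_special R hs' (hls s hs'))).2
    · intro s hs s' hs' hss
      have hsD : R.incid R.D s := mem_specF.mp (Finset.mem_coe.mp hs)
      have hs'D : R.incid R.D s' := mem_specF.mp (Finset.mem_coe.mp hs')
      by_contra hne
      have h1 := mt2_spec (meets_of_special R hsD (hls s hsD))
      have h2 := mt2_spec (meets_of_special R hs'D (hls s' hs'D))
      have hss' : mt2 R s l = mt2 R s' l := hss
      rw [hss'] at h1
      have hp := eq_pt R hne h1.1 h2.1 hsD hs'D
      exact hl (hp ▸ h1.2)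
  have := spec_card ho
  omega

/-- m is at least 2 -/
lemma m_ge {R : ProjRect P L} [Nonempty L] {m n : ℕ} (ho : R.HasOrder m n) {l1 : L}
    (hl1 : ¬ R.incid R.D l1) : 2 ≤ m := by
  obtain ⟨p1, p2, p3, h12, h13, h23, hi1, hi2, hi3⟩ := R.A3 l1
  have hD : ∀ p : P, R.incid p l1 → p ≠ R.D := fun p hp h => hl1 (h ▸ hp)
  have hdist : ∀ p q : P, R.incid p l1 → R.incid q l1 → p ≠ q →
      jn R p R.D ≠ jn R q R.D := by
    intro p q hp hq hpq heq
    have h1 := jn_spec (R := R) (hD p hp)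
    have h2 := jn_spec (R := R) (hD q hq)
    rw [heq] at h1
    have hnl : jn R q R.D ≠ l1 := fun h => hl1 (h ▸ h2.2)
    exact hpq (eq_pt R hnl h1.1 hp h2.1 hq)
  have hsub : ({jn R p1 R.D, jn R p2 R.D, jn R p3 R.D} : Finset L) ⊆ specF R := by
    intro l hl
    simp only [Finset.mem_insert, Finset.mem_singleton] at hl
    rcases hl with rfl | rfl | rfl
    · exact mem_specF.mpr (jn_spec (R := R) (hD p1 hi1)).2
    · exact mem_specF.mpr (jn_spec (R := R) (hD p2 hi2)).2
    · exact mem_specF.mpr (jn_spec (R := R) (hD p3 hi3)).2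
  have hcard : ({jn R p1 R.D, jn R p2 R.D, jn R p3 R.D} : Finset L).card = 3 := by
    rw [Finset.card_insert_of_notMem, Finset.card_insert_of_notMem, Finset.card_singleton]
    · simp only [Finset.mem_singleton]
      exact hdist p2 p3 hi2 hi3 h23
    · simp only [Finset.mem_insert, Finset.mem_singleton]
      push_neg
      exact ⟨hdist p1 p2 hi1 hi2 h12, hdist p1 p3 hi1 hi3 h13⟩
  have := Finset.card_le_card hsub
  rw [hcard, spec_card ho] at this
  omega

/-- there is a special line avoiding any ordinary point -/
lemma exists_special_avoid {R : ProjRect P L} {m n : ℕ} (ho : R.HasOrder m n) (hm : 1 ≤ m)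
    {x : P} (hxD : x ≠ R.D) : ∃ s : L, R.incid R.D s ∧ ¬ R.incid x s := by
  by_contra hq
  push_neg at hq
  have hlt : 1 < (specF R).card := by rw [spec_card ho]; omega
  obtain ⟨s, hs, s', hs', hne⟩ := Finset.one_lt_card.mp hlt
  have hsD := mem_specF.mp hs
  have hs'D := mem_specF.mp hs'
  exact hne (eq_line R hxD (hq s hsD) hsD (hq s' hs'D) hs'D)

/-- the number of ordinary lines through an ordinary point is exactly n -/
lemma ordlines_card {R : ProjRect P L} [Nonempty L] {m n : ℕ} (ho : R.HasOrder m n) (hm : 1 ≤ m)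
    {x : P} (hxD : x ≠ R.D) :
    (Finset.univ.filter (fun t : L => R.incid x t ∧ ¬ R.incid R.D t)).card = n := by
  obtain ⟨s, hsD, hxs⟩ := exists_special_avoid ho hm hxD
  set OxF := Finset.univ.filter (fun t : L => R.incid x t ∧ ¬ R.incid R.D t) with hOxF
  have hmem : ∀ {t : L}, t ∈ OxF ↔ R.incid x t ∧ ¬ R.incid R.D t := by
    intro t; simp [hOxF]
  have htar : ∀ {p : P}, p ∈ ptsF R s \ {R.D} ↔ R.incid p s ∧ p ≠ R.D := by
    intro p; simp [mem_ptsF]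
  have hle : OxF.card ≤ (ptsF R s \ {R.D}).card := by
    apply Finset.card_le_card_of_injOn (fun t => mt2 R s t)
    · intro t ht
      obtain ⟨hxt, htD⟩ := hmem.mp ht
      have hts : t ≠ s := fun h => htD (h ▸ hsD)
      have h1 := mt2_spec (meets_of_special R hsD hts)
      exact htar.mpr ⟨h1.1, fun h => htD (h ▸ h1.2)⟩
    · intro t ht t' ht' heq
      obtain ⟨hxt, htD⟩ := hmem.mp (Finset.mem_coe.mp ht)
      obtain ⟨hxt', ht'D⟩ := hmem.mp (Finset.mem_coe.mp ht')
      have hts : t ≠ s := fun h => htD (h ▸ hsD)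
      have ht's : t' ≠ s := fun h => ht'D (h ▸ hsD)
      have h1 := mt2_spec (meets_of_special R hsD hts)
      have h2 := mt2_spec (meets_of_special R hsD ht's)
      have heq' : mt2 R s t = mt2 R s t' := heq
      rw [heq'] at h1
      by_contra hne
      have hcx : mt2 R s t' ≠ x := fun h => hxs (h ▸ h2.1)
      exact hne (eq_line R hcx h1.2 hxt h2.2 hxt')
  have hge : (ptsF R s \ {R.D}).card ≤ OxF.card := by
    apply Finset.card_le_card_of_injOn (fun c => jn R x c)
    · intro c hc
      obtain ⟨hcs, hcD⟩ := htar.mp hc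
      have hxc : x ≠ c := fun h => hxs (h ▸ hcs)
      have h1 := jn_spec (R := R) hxc
      refine hmem.mpr ⟨h1.1, fun hD => ?_⟩
      have heq : jn R x c = s := eq_line R hcD h1.2 hD hcs hsD
      exact hxs (heq ▸ h1.1)
    · intro c hc c' hc' heq
      obtain ⟨hcs, hcD⟩ := htar.mp (Finset.mem_coe.mp hc)
      obtain ⟨hc's, hc'D⟩ := htar.mp (Finset.mem_coe.mp hc')
      have hxc : x ≠ c := fun h => hxs (h ▸ hcs)
      have hxc' : x ≠ c' := fun h => hxs (h ▸ hc's)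
      have h1 := jn_spec (R := R) hxc
      have h2 := jn_spec (R := R) hxc'
      have heq' : jn R x c = jn R x c' := heq
      rw [heq'] at h1
      have hts : jn R x c' ≠ s := fun h => hxs (h ▸ h2.1)
      exact eq_pt R hts h1.2 hcs h2.2 hc's
  have hDmem : ({R.D} : Finset P) ⊆ ptsF R s := by
    intro p hp
    simp only [Finset.mem_singleton] at hp
    exact mem_ptsF.mpr (hp ▸ hsD)
  have hcard := Finset.card_sdiff_of_subset hDmem
  rw [pts_card_special ho hsD, Finset.card_singleton] at hcard
  omega

/-- KEY: if g, g' are ordinary lines avoiding x but meeting l1 (an ordinary line through x),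
and some ordinary line t2 through x (other than l1) meets both g and g',
then every ordinary line t through x (other than l1) meeting g also meets g'. -/
lemma ml (R : ProjRect P L) {l1 : L} {x : P} (hl1 : ¬ R.incid R.D l1) (hx : R.incid x l1)
    {g g' t2 t : L}
    (hg : ¬ R.incid R.D g) (hg' : ¬ R.incid R.D g')
    (hxg : ¬ R.incid x g) (hxg' : ¬ R.incid x g')
    (hgl1 : ∃ u, R.incid u g ∧ R.incid u l1)
    (hg'l1 : ∃ u, R.incid u g' ∧ R.incid u l1)
    (ht2x : R.incid x t2) (ht2D : ¬ R.incid R.D t2) (ht2l1 : t2 ≠ l1)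
    (ht2g : ∃ w, R.incid w g ∧ R.incid w t2)
    (ht2g' : ∃ w, R.incid w g' ∧ R.incid w t2)
    (htx : R.incid x t) (htD : ¬ R.incid R.D t) (htl1 : t ≠ l1)
    (htg : ∃ w, R.incid w g ∧ R.incid w t) :
    ∃ w, R.incid w g' ∧ R.incid w t := by
  obtain ⟨u, hug, hul1⟩ := hgl1
  obtain ⟨u', hu'g', hu'l1⟩ := hg'l1
  obtain ⟨w2, hw2g, hw2t2⟩ := ht2g
  obtain ⟨w2', hw2'g', hw2't2⟩ := ht2g'
  obtain ⟨w, hwg, hwt⟩ := htg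
  by_cases hwg' : R.incid w g'
  · exact ⟨w, hwg', hwt⟩
  have hux : u ≠ x := fun h => hxg (h ▸ hug)
  have hu'x : u' ≠ x := fun h => hxg' (h ▸ hu'g')
  have hwx : w ≠ x := fun h => hxg (h ▸ hwg)
  have hw2x : w2 ≠ x := fun h => hxg (h ▸ hw2g)
  have hw2'x : w2' ≠ x := fun h => hxg' (h ▸ hw2'g')
  -- Step 1 : g and g' have a common point z
  have hz : ∃ z, R.incid z g ∧ R.incid z g' := by
    by_cases h1 : w2 = w2'
    · exact ⟨w2, hw2g, h1 ▸ hw2'g'⟩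
    by_cases h2 : u = u'
    · exact ⟨u, hug, h2 ▸ hu'g'⟩
    by_cases h3 : w2 = u'
    · exact ⟨w2, hw2g, h3 ▸ hu'g'⟩
    by_cases h4 : u = w2'
    · exact ⟨u, hug, h4 ▸ hw2'g'⟩
    have hw2u : w2 ≠ u := by
      intro h
      exact ht2l1 (eq_line R hw2x hw2t2 ht2x (h ▸ hul1) hx)
    have hw2'u' : w2' ≠ u' := by
      intro h
      exact ht2l1 (eq_line R hw2'x hw2't2 ht2x (h ▸ hu'l1) hx)
    exact R.A6 t2 l1 g g' ht2D hl1 ⟨x, ht2x, hx⟩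
      ⟨w2, u, w2', u', hw2u, h1, h3, h4, h2, hw2'u',
        hw2g, hw2t2, hug, hul1, hw2'g', hw2't2, hu'g', hu'l1⟩
  obtain ⟨z, hzg, hzg'⟩ := hz
  have hxz : x ≠ z := fun h => hxg (h ▸ hzg)
  have hwz : w ≠ z := fun h => hwg' (h ▸ hzg')
  have hwu' : w ≠ u' := fun h => hwg' (h ▸ hu'g')
  have hxu' : x ≠ u' := fun h => hxg' (h ▸ hu'g')
  by_cases hzu' : z = u'
  · -- concurrent case : z lies on l1
    have hzl1 : R.incid z l1 := by rw [hzu']; exact hu'l1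
    have hxw2' : x ≠ w2' := fun h => hxg' (h.symm ▸ hw2'g')
    have hww2' : w ≠ w2' := fun h => hwg' (h ▸ hw2'g')
    have hzw2' : z ≠ w2' := by
      intro h
      have hzt2 : R.incid z t2 := by rw [h]; exact hw2't2
      exact ht2l1 (eq_line R (Ne.symm hxz) hzt2 ht2x hzl1 hx)
    obtain ⟨p, hpt, hpg'⟩ := R.A6 g t2 t g' hg ht2D ⟨w2, hw2g, hw2t2⟩
      ⟨w, x, z, w2', hwx, hwz, hww2', hxz, hxw2', hzw2',
        hwt, hwg, htx, ht2x, hzg', hzg, hw2'g', hw2't2⟩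
    exact ⟨p, hpg', hpt⟩
  · -- main case
    obtain ⟨p, hpt, hpg'⟩ := R.A6 g l1 t g' hg hl1 ⟨u, hug, hul1⟩
      ⟨w, x, z, u', hwx, hwz, hwu', hxz, hxu', hzu',
        hwt, hwg, htx, hx, hzg', hzg, hu'g', hu'l1⟩
    exact ⟨p, hpg', hpt⟩

/-- every ordinary line t through x other than l1 admits a "witness" line g -/
lemma exists_wit (R : ProjRect P L) [Nonempty L] {l1 t : L} {x : P}
    (hl1 : ¬ R.incid R.D l1) (hx : R.incid x l1)
    (htx : R.incid x t) (htD : ¬ R.incid R.D t) (htl1 : t ≠ l1) :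
    ∃ g, ¬ R.incid R.D g ∧ ¬ R.incid x g ∧ (∃ u, R.incid u g ∧ R.incid u l1) ∧
      (∃ w, R.incid w g ∧ R.incid w t) := by
  -- a second point w on t
  obtain ⟨q1, q2, q3, hq12, hq13, hq23, hj1, hj2, hj3⟩ := R.A3 t
  obtain ⟨w, hwt, hwx⟩ : ∃ w, R.incid w t ∧ w ≠ x := by
    by_cases h : q1 = x
    · exact ⟨q2, hj2, fun hh => hq12 (h ▸ hh ▸ rfl)⟩
    · exact ⟨q1, hj1, h⟩
  have hwD : w ≠ R.D := fun h => htD (h ▸ hwt)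
  set sw := jn R w R.D with hsw
  have hsww : R.incid w sw := (jn_spec (R := R) hwD).1
  have hswD : R.incid R.D sw := (jn_spec (R := R) hwD).2
  -- a point u on l1, u ≠ x, u not on sw
  obtain ⟨u, hul1, hux, husw⟩ : ∃ u, R.incid u l1 ∧ u ≠ x ∧ ¬ R.incid u sw := by
    by_contra hq
    push_neg at hq
    obtain ⟨p1, p2, p3, h12, h13, h23, hi1, hi2, hi3⟩ := R.A3 l1
    have key : ∀ a b : P, R.incid a l1 → R.incid b l1 → a ≠ b → a ≠ x → b ≠ x → False := by
      intro a b ha hb hab hax hbx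
      have heq : l1 = sw := eq_line R hab ha hb (hq a ha hax) (hq b hb hbx)
      exact hl1 (heq ▸ hswD)
    by_cases e1 : p1 = x
    · exact key p2 p3 hi2 hi3 h23 (fun h => h12 (e1 ▸ h ▸ rfl)) (fun h => h13 (e1 ▸ h ▸ rfl))
    · by_cases e2 : p2 = x
      · exact key p1 p3 hi1 hi3 h13 e1 (fun h => h23 (e2 ▸ h ▸ rfl))
      · exact key p1 p2 hi1 hi2 h12 e1 e2
  have hwu : w ≠ u := by
    intro h
    exact htl1 (eq_line R (Ne.symm hwx) htx hwt hx (h ▸ hul1))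
  set g := jn R w u with hg
  have hwg : R.incid w g := (jn_spec (R := R) hwu).1
  have hug : R.incid u g := (jn_spec (R := R) hwu).2
  refine ⟨g, ?_, ?_, ⟨u, hug, hul1⟩, ⟨w, hwg, hwt⟩⟩
  · intro hDg
    have : g = sw := eq_line R hwD hwg hDg hsww hswD
    exact husw (this ▸ hug)
  · intro hxg
    have : g = t := eq_line R (Ne.symm hwx) hxg hwg htx hwt
    exact htl1 (eq_line R (Ne.symm hux) htx (this ▸ hug) hx hul1)

/-- class size: the set of ordinary lines through x (other than l1) meeting a witness line g
has exactly m - 1 elements -/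
lemma class_card (R : ProjRect P L) [Nonempty L] {m n : ℕ} (ho : R.HasOrder m n)
    {l1 g : L} {x u : P}
    (hl1 : ¬ R.incid R.D l1) (hx : R.incid x l1)
    (hgD : ¬ R.incid R.D g) (hxg : ¬ R.incid x g)
    (hug : R.incid u g) (hul1 : R.incid u l1) :
    ((Finset.univ.filter (fun t : L => R.incid x t ∧ ¬ R.incid R.D t ∧ t ≠ l1)).filter
      (fun t' => ∃ w, R.incid w g ∧ R.incid w t')).card = m - 1 := by
  have hxD : x ≠ R.D := fun h => hl1 (h ▸ hx)
  set sx := jn R x R.D with hsx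
  have hxsx : R.incid x sx := (jn_spec (R := R) hxD).1
  have hDsx : R.incid R.D sx := (jn_spec (R := R) hxD).2
  have hgsx : g ≠ sx := fun h => hxg (h ▸ hxsx)
  set w0 := mt2 R sx g with hw0
  have hw0s := mt2_spec (meets_of_special R hDsx hgsx)
  rw [← hw0] at hw0s
  obtain ⟨hw0sx, hw0g⟩ := hw0s
  have hux : u ≠ x := fun h => hxg (h ▸ hug)
  have hgl1 : g ≠ l1 := fun h => hxg (h ▸ hx)
  -- u ≠ w0
  have huw0 : u ≠ w0 := by
    intro h
    have husx : R.incid u sx := h ▸ hw0sx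
    have : l1 = sx := eq_line R hux hul1 hx husx hxsx
    exact hl1 (this ▸ hDsx)
  set S := Finset.univ.filter (fun t : L => R.incid x t ∧ ¬ R.incid R.D t ∧ t ≠ l1) with hS
  have hSmem : ∀ {t : L}, t ∈ S ↔ R.incid x t ∧ ¬ R.incid R.D t ∧ t ≠ l1 := by
    intro t; simp [hS]
  set C := S.filter (fun t' => ∃ w, R.incid w g ∧ R.incid w t') with hC
  have hCmem : ∀ {t : L}, t ∈ C ↔ (R.incid x t ∧ ¬ R.incid R.D t ∧ t ≠ l1) ∧
      ∃ w, R.incid w g ∧ R.incid w t := by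
    intro t; simp only [hC, Finset.mem_filter, hSmem]
  set W := ptsF R g \ {u, w0} with hW
  have hWmem : ∀ {p : P}, p ∈ W ↔ R.incid p g ∧ p ≠ u ∧ p ≠ w0 := by
    intro p; simp [hW, mem_ptsF]
  have hle : C.card ≤ W.card := by
    apply Finset.card_le_card_of_injOn (fun t' => mt2 R t' g)
    · intro t' ht'
      obtain ⟨⟨hxt', ht'D, ht'l1⟩, w, hwg, hwt'⟩ := hCmem.mp ht'
      have hme : ∃ p, R.incid p t' ∧ R.incid p g := ⟨w, hwt', hwg⟩
      obtain ⟨hct', hcg⟩ := mt2_spec hme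
      refine hWmem.mpr ⟨hcg, ?_, ?_⟩
      · intro h
        have : R.incid u t' := h ▸ hct'
        exact ht'l1 (eq_line R (Ne.symm hux) hxt' this hx hul1)
      · intro h
        have h1 : R.incid w0 t' := h ▸ hct'
        have hw0x : w0 ≠ x := fun hh => hxg (hh ▸ hw0g)
        have : t' = sx := eq_line R hw0x h1 hxt' hw0sx hxsx
        exact ht'D (this ▸ hDsx)
    · intro t' ht' t'' ht'' heq
      obtain ⟨⟨hxt', ht'D, ht'l1⟩, w, hwg, hwt'⟩ := hCmem.mp (Finset.mem_coe.mp ht')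
      obtain ⟨⟨hxt'', ht''D, ht''l1⟩, w', hw'g, hw't''⟩ := hCmem.mp (Finset.mem_coe.mp ht'')
      have hme : ∃ p, R.incid p t' ∧ R.incid p g := ⟨w, hwt', hwg⟩
      have hme' : ∃ p, R.incid p t'' ∧ R.incid p g := ⟨w', hw't'', hw'g⟩
      obtain ⟨hct', hcg⟩ := mt2_spec hme
      obtain ⟨hct'', hcg'⟩ := mt2_spec hme'
      have heq' : mt2 R t' g = mt2 R t'' g := heq
      rw [heq'] at hct'
      have hcx : mt2 R t'' g ≠ x := fun h => hxg (h ▸ hcg')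
      exact eq_line R hcx hct' hxt' hct'' hxt''
  have hge : W.card ≤ C.card := by
    apply Finset.card_le_card_of_injOn (fun w => jn R x w)
    · intro w hw
      obtain ⟨hwg', hwu, hww0⟩ := hWmem.mp hw
      have hxw : x ≠ w := fun h => hxg (h ▸ hwg')
      have hj := jn_spec (R := R) hxw
      refine hCmem.mpr ⟨⟨hj.1, ?_, ?_⟩, ⟨w, hwg', hj.2⟩⟩
      · intro hD
        have : jn R x w = sx := eq_line R hxD hj.1 hD hxsx hDsx
        have hwsx : R.incid w sx := this ▸ hj.2
        exact hww0 (eq_pt R (Ne.symm hgsx) hwsx hwg' hw0sx hw0g)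
      · intro hl
        exact hwu (eq_pt R hgl1 hwg' (hl ▸ hj.2) hug hul1)
    · intro w hw w' hw' heq
      obtain ⟨hwg', -, -⟩ := hWmem.mp (Finset.mem_coe.mp hw)
      obtain ⟨hw'g', -, -⟩ := hWmem.mp (Finset.mem_coe.mp hw')
      have hxw : x ≠ w := fun h => hxg (h ▸ hwg')
      have hxw' : x ≠ w' := fun h => hxg (h ▸ hw'g')
      have h1 := jn_spec (R := R) hxw
      have h2 := jn_spec (R := R) hxw'
      have heq' : jn R x w = jn R x w' := heq
      rw [heq'] at h1
      have hne : jn R x w' ≠ g := fun h => hxg (h ▸ h2.1)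
      exact eq_pt R hne h1.2 hwg' h2.2 hw'g'
  have hWcard : W.card = m - 1 := by
    have hsub : ({u, w0} : Finset P) ⊆ ptsF R g := by
      intro p hp
      simp only [Finset.mem_insert, Finset.mem_singleton] at hp
      rcases hp with rfl | rfl
      · exact mem_ptsF.mpr hug
      · exact mem_ptsF.mpr hw0g
    have h2 : ({u, w0} : Finset P).card = 2 := by
      rw [Finset.card_insert_of_notMem (by simpa using huw0), Finset.card_singleton]
    have := Finset.card_sdiff_of_subset hsub
    rw [pts_card_ord ho hgD, h2] at this
    rw [hW, this]
    omega
  omega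

/-- abstract: if a relation partitions a finset into classes of size k, then k divides the card -/
lemma dvd_card_of_classes {α : Type*} [DecidableEq α] (k : ℕ) (r : α → α → Prop) :
    ∀ (N : ℕ) (S : Finset α), S.card ≤ N →
    (∀ a ∈ S, r a a) →
    (∀ a ∈ S, ∀ b ∈ S, r a b → r b a) →
    (∀ a ∈ S, ∀ b ∈ S, ∀ c ∈ S, r a b → r b c → r a c) →
    (∀ a ∈ S, (S.filter (fun b => r a b)).card = k) →
    k ∣ S.card := by
  intro N
  induction N with
  | zero =>
    intro S hcard _ _ _ _
    have : S.card = 0 := by omega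
    simp [this]
  | succ N ih =>
    intro S hcard hrefl hsymm htrans hsize
    rcases Finset.eq_empty_or_nonempty S with rfl | ⟨a, ha⟩
    · simp
    set T := S.filter (fun b => r a b) with hT
    have hTsub : T ⊆ S := Finset.filter_subset _ _
    have hTcard : T.card = k := hsize a ha
    have haT : a ∈ T := Finset.mem_filter.mpr ⟨ha, hrefl a ha⟩
    have hk1 : 1 ≤ k := by
      rw [← hTcard]
      exact Finset.card_pos.mpr ⟨a, haT⟩
    set S' := S \ T with hS'
    have hsplit : S'.card + k = S.card := by
      rw [← hTcard]; exact Finset.card_sdiff_add_card_eq_card hTsub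
    have hS'sub : S' ⊆ S := Finset.sdiff_subset
    have hdisj : ∀ b ∈ S', ∀ c ∈ S, r b c → c ∈ S' := by
      intro b hb c hc hbc
      have hbS := hS'sub hb
      have hbT : b ∉ T := (Finset.mem_sdiff.mp hb).2
      refine Finset.mem_sdiff.mpr ⟨hc, fun hcT => ?_⟩
      have hac : r a c := (Finset.mem_filter.mp hcT).2
      have hcb : r c b := hsymm b hbS c hc hbc
      have hab : r a b := htrans a ha c hc b hbS hac hcb
      exact hbT (Finset.mem_filter.mpr ⟨hbS, hab⟩)
    have hsize' : ∀ b ∈ S', (S'.filter (fun c => r b c)).card = k := by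
      intro b hb
      have : S'.filter (fun c => r b c) = S.filter (fun c => r b c) := by
        ext c
        simp only [Finset.mem_filter]
        constructor
        · rintro ⟨hc, hrc⟩; exact ⟨hS'sub hc, hrc⟩
        · rintro ⟨hc, hrc⟩; exact ⟨hdisj b hb c hc hrc, hrc⟩
      rw [this]
      exact hsize b (hS'sub hb)
    have hdvd' : k ∣ S'.card := by
      apply ih S' (by omega)
      · intro b hb; exact hrefl b (hS'sub hb)
      · intro b hb c hc; exact hsymm b (hS'sub hb) c (hS'sub hc)
      · intro b hb c hc d hd; exact htrans b (hS'sub hb) c (hS'sub hc) d (hS'sub hd)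
      · exact hsize'
    rw [← hsplit]
    exact Nat.dvd_add hdvd' dvd_rfl

/-- the main counting bound: m*(m-1) + 2 ≤ n -/
lemma bound (R : ProjRect P L) [Nonempty L] {m n : ℕ} (ho : R.HasOrder m n) {l1 l2 : L}
    (h1 : ¬ R.incid R.D l1) (h2 : ¬ R.incid R.D l2)
    (hd : ∀ p, ¬(R.incid p l1 ∧ R.incid p l2)) : m * (m - 1) + 2 ≤ n := by
  -- a special line s
  obtain ⟨s, hs⟩ : ∃ s, s ∈ specF R := by
    apply Finset.card_pos.mp; rw [spec_card ho]; omega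
  have hsD : R.incid R.D s := mem_specF.mp hs
  have hl1s : l1 ≠ s := fun h => h1 (h ▸ hsD)
  have hl2s : l2 ≠ s := fun h => h2 (h ▸ hsD)
  have hsl1 : s ≠ l1 := Ne.symm hl1s
  have hsl2 : s ≠ l2 := Ne.symm hl2s
  set as := mt2 R s l1 with has
  obtain ⟨hasS, hasl1⟩ := mt2_spec (meets_of_special R hsD hl1s)
  rw [← has] at hasS hasl1
  set bs := mt2 R s l2 with hbs
  obtain ⟨hbsS, hbsl2⟩ := mt2_spec (meets_of_special R hsD hl2s)
  rw [← hbs] at hbsS hbsl2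
  have hdisj12 : ∀ {p q : P}, R.incid p l1 → R.incid q l2 → p ≠ q := by
    intro p q hp hq h
    exact hd p ⟨hp, h ▸ hq⟩
  -- for a on l1 : its special line and the matched point on l2
  have haD : ∀ {a : P}, R.incid a l1 → a ≠ R.D := fun ha h => h1 (h ▸ ha)
  have hsa1 : ∀ {a : P} (ha : R.incid a l1), R.incid a (jn R a R.D) :=
    fun ha => (jn_spec (R := R) (haD ha)).1
  have hsa2 : ∀ {a : P} (ha : R.incid a l1), R.incid R.D (jn R a R.D) :=
    fun ha => (jn_spec (R := R) (haD ha)).2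
  have hl2sa : ∀ {a : P} (ha : R.incid a l1), l2 ≠ jn R a R.D :=
    fun ha h => h2 (h ▸ hsa2 ha)
  have hca : ∀ {a : P} (ha : R.incid a l1),
      R.incid (mt2 R (jn R a R.D) l2) (jn R a R.D) ∧ R.incid (mt2 R (jn R a R.D) l2) l2 :=
    fun ha => mt2_spec (meets_of_special R (hsa2 ha) (hl2sa ha))
  -- a not on s unless a = as
  have hanotS : ∀ {a : P}, R.incid a l1 → a ≠ as → ¬ R.incid a s := by
    intro a ha hne hcontra
    exact hne (eq_pt R hsl1 hcontra ha hasS hasl1)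
  have hbnotS : ∀ {b : P}, R.incid b l2 → b ≠ bs → ¬ R.incid b s := by
    intro b hb hne hcontra
    exact hne (eq_pt R hsl2 hcontra hb hbsS hbsl2)
  -- b* ≠ ca a
  have hbsca : ∀ {a : P}, R.incid a l1 → a ≠ as → bs ≠ mt2 R (jn R a R.D) l2 := by
    intro a ha hne h
    by_cases hsas : jn R a R.D = s
    · exact hanotS ha hne (hsas ▸ hsa1 ha)
    · have hbsSa : R.incid bs (jn R a R.D) := h ▸ (hca ha).1
      have hbsD : bs ≠ R.D := fun hh => h2 (hh ▸ hbsl2)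
      exact hbsD (eq_pt R hsas hbsSa hbsS (hsa2 ha) hsD)
  -- the domain of the injection
  set F1 := ptsF R l1 \ {as} with hF1
  have hF1card : F1.card = m := by
    have hsub : ({as} : Finset P) ⊆ ptsF R l1 := by
      intro p hp; simp only [Finset.mem_singleton] at hp; exact mem_ptsF.mpr (hp ▸ hasl1)
    have := Finset.card_sdiff_of_subset hsub
    rw [pts_card_ord ho h1, Finset.card_singleton] at this
    rw [hF1, this]
    omega
  have hF1mem : ∀ {a : P}, a ∈ F1 ↔ R.incid a l1 ∧ a ≠ as := by
    intro a; simp [hF1, mem_ptsF]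
  set inner := fun a : P => ptsF R l2 \ {bs, mt2 R (jn R a R.D) l2} with hinner
  have hinncard : ∀ {a : P}, a ∈ F1 → (inner a).card = m - 1 := by
    intro a ha
    obtain ⟨ha1, ha2⟩ := hF1mem.mp ha
    have hsub : ({bs, mt2 R (jn R a R.D) l2} : Finset P) ⊆ ptsF R l2 := by
      intro p hp; simp only [Finset.mem_insert, Finset.mem_singleton] at hp
      rcases hp with rfl | rfl
      · exact mem_ptsF.mpr hbsl2
      · exact mem_ptsF.mpr (hca ha1).2
    have hc2 : ({bs, mt2 R (jn R a R.D) l2} : Finset P).card = 2 := by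
      rw [Finset.card_insert_of_notMem (by simpa using hbsca ha1 ha2), Finset.card_singleton]
    have := Finset.card_sdiff_of_subset hsub
    rw [pts_card_ord ho h2, hc2] at this
    rw [hinner]; rw [this]
    omega
  have hinnmem : ∀ {a b : P}, b ∈ inner a ↔
      R.incid b l2 ∧ b ≠ bs ∧ b ≠ mt2 R (jn R a R.D) l2 := by
    intro a b; simp [hinner, mem_ptsF]
  set DOM := F1.biUnion (fun a => (inner a).image (fun b => (a, b))) with hDOM
  have hDOMcard : DOM.card = m * (m - 1) := by
    rw [hDOM, Finset.card_biUnion]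
    · rw [Finset.sum_const_nat (m := m - 1), hF1card]
      intro a ha
      rw [Finset.card_image_of_injective _ (fun b b' hb => (Prod.mk.injEq a b a b').mp hb |>.2)]
      exact hinncard ha
    · intro a ha a' ha' hne
      rw [Function.onFun, Finset.disjoint_left]
      intro q hq hq'
      obtain ⟨b, -, hb⟩ := Finset.mem_image.mp hq
      obtain ⟨b', -, hb'⟩ := Finset.mem_image.mp hq'
      rw [← hb'] at hb
      exact hne ((Prod.mk.injEq _ _ _ _).mp hb).1
  have hDOMmem : ∀ {q : P × P}, q ∈ DOM ↔ (R.incid q.1 l1 ∧ q.1 ≠ as) ∧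
      (R.incid q.2 l2 ∧ q.2 ≠ bs ∧ q.2 ≠ mt2 R (jn R q.1 R.D) l2) := by
    intro q
    constructor
    · intro hq
      obtain ⟨a, ha, hq'⟩ := Finset.mem_biUnion.mp hq
      obtain ⟨b, hb, heq⟩ := Finset.mem_image.mp hq'
      obtain ⟨rfl, rfl⟩ : a = q.1 ∧ b = q.2 := by
        rw [← heq]; exact ⟨rfl, rfl⟩
      exact ⟨hF1mem.mp ha, hinnmem.mp hb⟩
    · rintro ⟨hq1, hq2⟩
      exact Finset.mem_biUnion.mpr ⟨q.1, hF1mem.mpr hq1,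
        Finset.mem_image.mpr ⟨q.2, hinnmem.mpr hq2, rfl⟩⟩
  -- properties of the join of a pair in DOM
  have hjoin : ∀ {a b : P}, R.incid a l1 → R.incid b l2 → a ≠ as →
      b ≠ bs → b ≠ mt2 R (jn R a R.D) l2 →
      R.incid a (jn R a b) ∧ R.incid b (jn R a b) ∧ ¬ R.incid R.D (jn R a b) := by
    intro a b ha hb hnas hnbs hnca
    have hab : a ≠ b := hdisj12 ha hb
    obtain ⟨hag, hbg⟩ := jn_spec (R := R) hab
    refine ⟨hag, hbg, fun hDg => ?_⟩
    have hgsa : jn R a b = jn R a R.D :=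
      eq_line R (haD ha) hag hDg (hsa1 ha) (hsa2 ha)
    have hbsa : R.incid b (jn R a R.D) := hgsa ▸ hbg
    exact hnca (eq_pt R (Ne.symm (hl2sa ha)) hbsa hb (hca ha).1 (hca ha).2)
  -- target finset
  set TGT := ptsF R s \ {R.D, as, bs} with hTGT
  have hDas : R.D ≠ as := fun h => h1 (h ▸ hasl1)
  have hDbs : R.D ≠ bs := fun h => h2 (h ▸ hbsl2)
  have hasbs : as ≠ bs := hdisj12 hasl1 hbsl2
  have hTGTcard : TGT.card + 3 = n + 1 := by
    have hsub : ({R.D, as, bs} : Finset P) ⊆ ptsF R s := by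
      intro p hp; simp only [Finset.mem_insert, Finset.mem_singleton] at hp
      rcases hp with rfl | rfl | rfl
      · exact mem_ptsF.mpr hsD
      · exact mem_ptsF.mpr hasS
      · exact mem_ptsF.mpr hbsS
    have hc3 : ({R.D, as, bs} : Finset P).card = 3 := by
      rw [Finset.card_insert_of_notMem (by simp [hDas, hDbs]),
        Finset.card_insert_of_notMem (by simpa using hasbs), Finset.card_singleton]
    have := Finset.card_sdiff_add_card_eq_card hsub
    rw [pts_card_special ho hsD, hc3] at this
    rw [hTGT]; omega
  have hinj : DOM.card ≤ TGT.card := by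
    apply Finset.card_le_card_of_injOn (fun q => mt2 R s (jn R q.1 q.2))
    · intro q hq
      obtain ⟨⟨ha, hnas⟩, hb, hnbs, hnca⟩ := hDOMmem.mp hq
      obtain ⟨hag, hbg, hgD⟩ := hjoin ha hb hnas hnbs hnca
      have hgs : jn R q.1 q.2 ≠ s := fun h => hgD (h ▸ hsD)
      obtain ⟨hzs, hzg⟩ := mt2_spec (meets_of_special R hsD hgs)
      have hza : mt2 R s (jn R q.1 q.2) ≠ q.1 := fun h => (hanotS ha hnas) (h ▸ hzs)
      have hzb : mt2 R s (jn R q.1 q.2) ≠ q.2 := fun h => (hbnotS hb hnbs) (h ▸ hzs)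
      simp only [Finset.mem_coe, hTGT, Finset.mem_sdiff, mem_ptsF, Finset.mem_insert, Finset.mem_singleton]
      refine ⟨hzs, ?_⟩
      push_neg
      refine ⟨fun h => hgD (h ▸ hzg), fun h => ?_, fun h => ?_⟩
      · -- z = as : then g = l1, contradiction
        have hasg : R.incid as (jn R q.1 q.2) := h ▸ hzg
        have hgl1 : jn R q.1 q.2 = l1 := eq_line R hnas hag hasg ha hasl1
        exact hd q.2 ⟨hgl1 ▸ hbg, hb⟩
      · -- z = bs : then g = l2, contradiction
        have hbsg : R.incid bs (jn R q.1 q.2) := h ▸ hzg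
        have hgl2 : jn R q.1 q.2 = l2 := eq_line R hnbs hbg hbsg hb hbsl2
        exact hd q.1 ⟨ha, hgl2 ▸ hag⟩
    · intro q hq q' hq' heq
      obtain ⟨⟨ha, hnas⟩, hb, hnbs, hnca⟩ := hDOMmem.mp (Finset.mem_coe.mp hq)
      obtain ⟨⟨ha', hnas'⟩, hb', hnbs', hnca'⟩ := hDOMmem.mp (Finset.mem_coe.mp hq')
      obtain ⟨hag, hbg, hgD⟩ := hjoin ha hb hnas hnbs hnca
      obtain ⟨hag', hbg', hgD'⟩ := hjoin ha' hb' hnas' hnbs' hnca'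
      have hgs : jn R q.1 q.2 ≠ s := fun h => hgD (h ▸ hsD)
      have hgs' : jn R q'.1 q'.2 ≠ s := fun h => hgD' (h ▸ hsD)
      obtain ⟨hzs, hzg⟩ := mt2_spec (meets_of_special R hsD hgs)
      obtain ⟨hzs', hzg'⟩ := mt2_spec (meets_of_special R hsD hgs')
      have heq' : mt2 R s (jn R q.1 q.2) = mt2 R s (jn R q'.1 q'.2) := heq
      rw [← heq'] at hzg'
      have hca1 : mt2 R s (jn R q.1 q.2) ≠ q.1 := fun h => hanotS ha hnas (h ▸ hzs)
      have hca1' : mt2 R s (jn R q.1 q.2) ≠ q'.1 := fun h => hanotS ha' hnas' (h ▸ hzs)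
      have hcb1 : mt2 R s (jn R q.1 q.2) ≠ q.2 := fun h => hbnotS hb hnbs (h ▸ hzs)
      have hcb1' : mt2 R s (jn R q.1 q.2) ≠ q'.2 := fun h => hbnotS hb' hnbs' (h ▸ hzs)
      by_cases haa : q.1 = q'.1
      · have hq1g' : R.incid q.1 (jn R q'.1 q'.2) := by rw [haa]; exact hag'
        have hgg' : jn R q.1 q.2 = jn R q'.1 q'.2 :=
          eq_line R hca1 hzg hag hzg' hq1g'
        have hgl2 : jn R q.1 q.2 ≠ l2 := fun h => hd q.1 ⟨ha, h ▸ hag⟩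
        have hbb : q.2 = q'.2 := eq_pt R hgl2 hbg hb (hgg' ▸ hbg') hb'
        exact Prod.ext haa hbb
      · exfalso
        by_cases hbb : q.2 = q'.2
        · have hq2g' : R.incid q.2 (jn R q'.1 q'.2) := by rw [hbb]; exact hbg'
          have hgg' : jn R q.1 q.2 = jn R q'.1 q'.2 :=
            eq_line R hcb1 hzg hbg hzg' hq2g'
          have hgl1 : jn R q.1 q.2 ≠ l1 := fun h => hd q.2 ⟨h ▸ hbg, hb⟩
          exact haa (eq_pt R hgl1 hag ha (hgg' ▸ hag') ha')
        · obtain ⟨p, hp1, hp2⟩ := R.A6 (jn R q.1 q.2) (jn R q'.1 q'.2) l1 l2 hgD hgD'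
            ⟨mt2 R s (jn R q.1 q.2), hzg, hzg'⟩
            ⟨q.1, q'.1, q.2, q'.2, haa, hdisj12 ha hb, hdisj12 ha hb',
              hdisj12 ha' hb, hdisj12 ha' hb', hbb,
              ha, hag, ha', hag', hb, hbg, hb', hbg'⟩
          exact hd p ⟨hp1, hp2⟩
  have h3n : 3 ≤ n + 1 := by omega
  rw [hDOMcard] at hinj
  omega

end Fin
end PRaux

open PRaux in
/-- A nontrivial finite projective rectangle of order (m,n) satisfies n ≥ m^2. -/
theorem stmt5 {P L : Type*} [Fintype P] [Fintype L] (R : ProjRect P L) (m n : ℕ)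
    (h : R.HasOrder m n) (hnt : R.Nontrivial) :
    m ^ 2 ≤ n := by
  obtain ⟨l1, l2, hol1, hol2, hd⟩ := hnt
  replace hol1 : ¬ R.incid R.D l1 := hol1
  replace hol2 : ¬ R.incid R.D l2 := hol2
  haveI : Nonempty L := ⟨l1⟩
  have hm : 2 ≤ m := m_ge h hol1
  have hbd : m * (m - 1) + 2 ≤ n := bound R h hol1 hol2 hd
  obtain ⟨x, x2, x3, -, -, -, hx, -, -⟩ := R.A3 l1
  have hxD : x ≠ R.D := fun hh => hol1 (hh ▸ hx)
  have hOx := ordlines_card h (show 1 ≤ m by omega) hxD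
  set S := Finset.univ.filter (fun t : L => R.incid x t ∧ ¬ R.incid R.D t ∧ t ≠ l1) with hS
  have hSmem : ∀ {t : L}, t ∈ S ↔ R.incid x t ∧ ¬ R.incid R.D t ∧ t ≠ l1 := by
    intro t; simp [hS]
  have hScard : S.card = n - 1 := by
    have hl1mem : l1 ∈ Finset.univ.filter (fun t : L => R.incid x t ∧ ¬ R.incid R.D t) := by
      simp [hx, hol1]
    have hE : S = (Finset.univ.filter (fun t : L => R.incid x t ∧ ¬ R.incid R.D t)).erase l1 := by
      ext t
      simp only [hS, Finset.mem_erase, Finset.mem_filter, Finset.mem_univ, true_and]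
      tauto
    rw [hE, Finset.card_erase_of_mem hl1mem, hOx]
  -- the coplanarity relation
  set r := fun t t' : L => ∃ g, ¬ R.incid R.D g ∧ ¬ R.incid x g ∧
    (∃ u, R.incid u g ∧ R.incid u l1) ∧
    (∃ w, R.incid w g ∧ R.incid w t) ∧ (∃ w, R.incid w g ∧ R.incid w t') with hr
  have hdvd : (m - 1) ∣ S.card := by
    apply dvd_card_of_classes (m - 1) r S.card S (le_refl _)
    · -- refl
      intro t ht
      obtain ⟨htx, htD, htl1⟩ := hSmem.mp ht
      obtain ⟨g, hgD, hxg, hu, hw⟩ := exists_wit R hol1 hx htx htD htl1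
      exact ⟨g, hgD, hxg, hu, hw, hw⟩
    · -- symm
      rintro a ha b hb ⟨g, h1', h2', h3', h4', h5'⟩
      exact ⟨g, h1', h2', h3', h5', h4'⟩
    · -- trans
      rintro a ha b hb c hc ⟨g, hgD, hxg, hu, hga, hgb⟩ ⟨g', hg'D, hxg', hu', hg'b, hg'c⟩
      obtain ⟨hax, haD, hal1⟩ := hSmem.mp ha
      obtain ⟨hbx, hbD, hbl1⟩ := hSmem.mp hb
      have := ml R hol1 hx hgD hg'D hxg hxg' hu hu' hbx hbD hbl1 hgb hg'b hax haD hal1 hga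
      exact ⟨g', hg'D, hxg', hu', this, hg'c⟩
    · -- size
      intro t ht
      obtain ⟨htx, htD, htl1⟩ := hSmem.mp ht
      obtain ⟨g, hgD, hxg, hu, hw⟩ := exists_wit R hol1 hx htx htD htl1
      have hfeq : S.filter (fun b => r t b) =
          S.filter (fun t' => ∃ w, R.incid w g ∧ R.incid w t') := by
        ext t'
        simp only [Finset.mem_filter]
        constructor
        · rintro ⟨ht', ⟨g'', hg''D, hxg'', hu'', hg''t, hg''t'⟩⟩
          obtain ⟨ht'x, ht'D, ht'l1⟩ := hSmem.mp ht'
          exact ⟨ht', ml R hol1 hx hg''D hgD hxg'' hxg hu'' hu htx htD htl1 hg''t hw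
            ht'x ht'D ht'l1 hg''t'⟩
        · rintro ⟨ht', hmg⟩
          exact ⟨ht', g, hgD, hxg, hu, hw, hmg⟩
      obtain ⟨u, hug, hul1⟩ := hu
      have hres := (congrArg Finset.card hfeq).trans (class_card R h hol1 hx hgD hxg hug hul1)
      convert hres using 2
      exact Finset.filter_congr_decidable ..
  obtain ⟨B, hB⟩ := hdvd
  have hbd' : (m - 1) * m + 2 ≤ n := by rwa [mul_comm] at hbd
  have key : ∀ A Bp : ℕ, A + 2 ≤ n → Bp = n - 1 → A < Bp := by
    intro A Bp hA hBp; omega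
  have hlt : (m - 1) * m < (m - 1) * B :=
    key _ _ hbd' (by rw [← hB, hScard])
  have hmB : m < B := Nat.lt_of_mul_lt_mul_left hlt
  have hfin : (m - 1) * (m + 1) ≤ (m - 1) * B := Nat.mul_le_mul (le_refl _) hmB
  have hsq : (m - 1) * (m + 1) + 1 = m ^ 2 := by
    obtain ⟨j, rfl⟩ : ∃ j, m = j + 2 := ⟨m - 2, by omega⟩
    have e : j + 2 - 1 = j + 1 := by omega
    rw [e]; ring
  calc m ^ 2 = (m - 1) * (m + 1) + 1 := hsq.symm
    _ ≤ (m - 1) * B + 1 := Nat.add_le_add_right hfin 1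
    _ = (n - 1) + 1 := by rw [← hB]; rw [hScard]
    _ = n := by omega
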